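/- Eigendecomposition of the averaged PSC coset state: the density matrix ρ = |C|^{-1} Σ_{c ∈ C} Z(c) |θ⟩⟨θ|^{⊗n} Z(c) has eigenvectors |ψ(m)⟩ = Σ_{v ∈ m G_{C^⫫} ⊕ C^⊥} √(p_v / λ(m)) |v⟩ with eigenvalues λ(m) = Σ_{v ∈ m G_{C^⫫} ⊕ C^⊥} p^{w_H(v)} (1-p)^{n - w_H(v)} for m ∈ F_2^k, where p = sin²(θ/2) = (1 − cos θ)/2, and these account for all nonzero eigenvalues. In particular the nonzero eigenvalues of ρ are the dual-channel coset probabilities {2^{-k/2} ŝ(m)}. -/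

import Mathlib

open Matrix
open scoped Classical

noncomputable section

/-- Hamming weight of a binary vector. -/
def hammingWt {ι : Type*} [Fintype ι] (v : ι → ZMod 2) : ℕ :=
  (Finset.univ.filter fun i => v i ≠ 0).card

/-- i.i.d. Bernoulli(p) probability of a vector. -/
def bernP (p : ℝ) (n : ℕ) {ι : Type*} [Fintype ι] (v : ι → ZMod 2) : ℝ :=
  p ^ hammingWt v * (1 - p) ^ (n - hammingWt v)

/-- The vector Z(c_g)|θ⟩^{⊗n} (real amplitudes), with c_g = g·G_C and G_C the
top k rows of the invertible matrix A. -/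
def pscVec {k m : ℕ} (θ : ℝ) (A : Matrix (Fin k ⊕ Fin m) (Fin k ⊕ Fin m) (ZMod 2))
    (g : Fin k → ZMod 2) : ((Fin k ⊕ Fin m) → ZMod 2) → ℝ := fun v =>
  (-1 : ℝ) ^ ((dotProduct (Matrix.vecMul g (A.submatrix Sum.inl id)) v).val) *
    ∏ j, (if v j = 0 then Real.cos (θ / 2) else Real.sin (θ / 2))

/-- The averaged PSC coset state ρ = 2^{-k} ∑_{c ∈ C} Z(c)|θ⟩⟨θ|^{⊗n} Z(c). -/
def rhoPSC {k m : ℕ} (θ : ℝ) (A : Matrix (Fin k ⊕ Fin m) (Fin k ⊕ Fin m) (ZMod 2)) :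
    Matrix ((Fin k ⊕ Fin m) → ZMod 2) ((Fin k ⊕ Fin m) → ZMod 2) ℝ :=
  ((2 : ℝ) ^ k)⁻¹ •
    ∑ g : Fin k → ZMod 2, Matrix.vecMulVec (pscVec θ A g) (pscVec θ A g)

/-- λ(m̂) = ∑_{v ∈ m̂ G_{C^⫫} ⊕ C^⊥} p^{w_H(v)}(1-p)^{n-w_H(v)}. -/
def lamPSC {k m : ℕ} (p : ℝ) (A : Matrix (Fin k ⊕ Fin m) (Fin k ⊕ Fin m) (ZMod 2))
    (mh : Fin k → ZMod 2) : ℝ :=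
  ∑ u : Fin m → ZMod 2,
    bernP p (k + m) (Matrix.vecMul mh (((A⁻¹)ᵀ).submatrix Sum.inl id)
      + Matrix.vecMul u (((A⁻¹)ᵀ).submatrix Sum.inr id))

/-- The eigenvector |ψ(m̂)⟩ = ∑_{v ∈ m̂ G_{C^⫫} ⊕ C^⊥} √(p_v/λ(m̂)) |v⟩. -/
def psiPSC {k m : ℕ} (p : ℝ) (A : Matrix (Fin k ⊕ Fin m) (Fin k ⊕ Fin m) (ZMod 2))
    (mh : Fin k → ZMod 2) : ((Fin k ⊕ Fin m) → ZMod 2) → ℝ := fun v =>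
  if ∃ u : Fin m → ZMod 2,
      v = Matrix.vecMul mh (((A⁻¹)ᵀ).submatrix Sum.inl id)
        + Matrix.vecMul u (((A⁻¹)ᵀ).submatrix Sum.inr id)
  then Real.sqrt (bernP p (k + m) v / lamPSC p A mh) else 0

namespace PSCaux

def chi (a : ZMod 2) : ℝ := (-1 : ℝ) ^ a.val

lemma chi_zero : chi (0 : ZMod 2) = 1 := by norm_num [chi, ZMod.val_zero]

lemma chi_one : chi (1 : ZMod 2) = -1 := by norm_num [chi, ZMod.val_one]

lemma chi_add (a b : ZMod 2) : chi (a + b) = chi a * chi b := by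
  rcases (show a = 0 ∨ a = 1 by revert a; decide) with ha | ha <;>
  rcases (show b = 0 ∨ b = 1 by revert b; decide) with hb | hb <;>
  subst ha hb <;>
  norm_num [chi, show ZMod.val ((2:ZMod 2)) = 0 by decide, ZMod.val_zero, ZMod.val_one]

lemma chi_sum {k : ℕ} (y : Fin k → ZMod 2) :
    ∑ g : Fin k → ZMod 2, chi (g ⬝ᵥ y) = if y = 0 then (2:ℝ)^k else 0 := by
  by_cases hy : y = 0
  · subst hy
    rw [if_pos rfl]
    simp [dotProduct_zero, chi_zero, Finset.card_univ]
  · obtain ⟨i, hi⟩ := Function.ne_iff.mp hy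
    have hyi : y i = 1 := (show ∀ a : ZMod 2, a ≠ 0 → a = 1 by decide) _ hi
    rw [if_neg hy]
    have key : ∀ g : Fin k → ZMod 2,
        chi ((g + Pi.single i 1) ⬝ᵥ y) = - chi (g ⬝ᵥ y) := by
      intro g
      have h1 : (g + Pi.single i 1) ⬝ᵥ y = g ⬝ᵥ y + 1 := by
        rw [add_dotProduct]
        congr 1
        simp [dotProduct, Pi.single_apply, hyi]
      rw [h1, chi_add, chi_one]; ring
    have h2 : ∑ g : Fin k → ZMod 2, chi (g ⬝ᵥ y)
        = ∑ g : Fin k → ZMod 2, chi ((g + Pi.single i 1) ⬝ᵥ y) :=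
      (Fintype.sum_equiv (Equiv.addRight (Pi.single i 1)) _ _ (fun g => rfl)).symm
    have h3 : ∑ g : Fin k → ZMod 2, chi (g ⬝ᵥ y)
        = - ∑ g : Fin k → ZMod 2, chi (g ⬝ᵥ y) := by
      conv_lhs => rw [h2]
      simp only [key, Finset.sum_neg_distrib]
    linarith

variable {k m : ℕ}

/-- the amplitude -/
def amp (θ : ℝ) (v : (Fin k ⊕ Fin m) → ZMod 2) : ℝ :=
  ∏ j, (if v j = 0 then Real.cos (θ / 2) else Real.sin (θ / 2))

lemma amp_eq_sqrt {θ pp : ℝ} (hps : pp = Real.sin (θ/2)^2)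
    (h1p : 1 - pp = Real.cos (θ/2)^2)
    (hs : 0 ≤ Real.sin (θ/2)) (hc : 0 ≤ Real.cos (θ/2))
    (v : (Fin k ⊕ Fin m) → ZMod 2) :
    amp θ v = Real.sqrt (bernP pp (k+m) v) := by
  set s := Real.sin (θ/2)
  set c := Real.cos (θ/2)
  set w := hammingWt v with hwdef
  have hcard : (Finset.univ : Finset (Fin k ⊕ Fin m)).card = k + m := by
    simp [Finset.card_univ]
  have hkey := Finset.card_filter_add_card_filter_not
    (s := (Finset.univ : Finset (Fin k ⊕ Fin m))) (p := fun j => v j = 0)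
  have hwe : (Finset.univ.filter fun j => ¬ v j = 0).card = w := rfl
  have hz : (Finset.univ.filter fun j => v j = 0).card = (k+m) - w := by
    omega
  have hw : w ≤ k + m := by omega
  have hprod : amp θ v = c ^ ((k+m) - w) * s ^ w := by
    rw [amp, Finset.prod_ite]
    simp [Finset.prod_const, hz, hwe]; rfl
  have hb : bernP pp (k+m) v = (s ^ w * c ^ ((k+m)-w))^2 := by
    rw [bernP, ← hwdef, hps]
    have : (1 - pp) = c^2 := h1p
    rw [hps] at this
    rw [show (1 - s^2 : ℝ) = c^2 by linarith [this]]
    ring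
  rw [hb, Real.sqrt_sq (by positivity), hprod]; ring

lemma bernP_pos {pp : ℝ} (hp0 : 0 < pp) (hp1 : pp < 1)
    (n : ℕ) (v : (Fin k ⊕ Fin m) → ZMod 2) : 0 < bernP pp n v := by
  rw [bernP]
  have : 0 < 1 - pp := by linarith
  exact mul_pos (pow_pos hp0 _) (pow_pos this _)

/-- syndrome-like map -/
def cvec (A : Matrix (Fin k ⊕ Fin m) (Fin k ⊕ Fin m) (ZMod 2))
    (v : (Fin k ⊕ Fin m) → ZMod 2) : Fin k → ZMod 2 :=
  fun i => A.mulVec v (Sum.inl i)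

variable {A : Matrix (Fin k ⊕ Fin m) (Fin k ⊕ Fin m) (ZMod 2)}

lemma coset_param (A : Matrix (Fin k ⊕ Fin m) (Fin k ⊕ Fin m) (ZMod 2))
    (mh : Fin k → ZMod 2) (u : Fin m → ZMod 2) :
    Matrix.vecMul mh (((A⁻¹)ᵀ).submatrix Sum.inl id)
      + Matrix.vecMul u (((A⁻¹)ᵀ).submatrix Sum.inr id)
    = (A⁻¹) *ᵥ Sum.elim mh u := by
  funext j
  simp [Matrix.vecMul, Matrix.mulVec, dotProduct, Fintype.sum_sum_type,
    mul_comm]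

lemma hABv (hA : IsUnit A) (s : (Fin k ⊕ Fin m) → ZMod 2) :
    A *ᵥ (A⁻¹ *ᵥ s) = s := by
  rw [Matrix.mulVec_mulVec, Matrix.mul_nonsing_inv A
    ((Matrix.isUnit_iff_isUnit_det A).mp hA), Matrix.one_mulVec]

lemma hBAv (hA : IsUnit A) (s : (Fin k ⊕ Fin m) → ZMod 2) :
    A⁻¹ *ᵥ (A *ᵥ s) = s := by
  rw [Matrix.mulVec_mulVec, Matrix.nonsing_inv_mul A
    ((Matrix.isUnit_iff_isUnit_det A).mp hA), Matrix.one_mulVec]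

lemma exists_iff (hA : IsUnit A) (mh : Fin k → ZMod 2)
    (v : (Fin k ⊕ Fin m) → ZMod 2) :
    (∃ u : Fin m → ZMod 2,
      v = Matrix.vecMul mh (((A⁻¹)ᵀ).submatrix Sum.inl id)
        + Matrix.vecMul u (((A⁻¹)ᵀ).submatrix Sum.inr id))
    ↔ cvec A v = mh := by
  constructor
  · rintro ⟨u, rfl⟩
    funext i
    show (A *ᵥ _) (Sum.inl i) = mh i
    rw [coset_param, hABv hA]
    rfl
  · intro h
    refine ⟨fun i => A.mulVec v (Sum.inr i), ?_⟩
    rw [coset_param]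
    have he : Sum.elim mh (fun i => A.mulVec v (Sum.inr i)) = A *ᵥ v := by
      funext x
      cases x with
      | inl i => exact (congrFun h i).symm
      | inr i => rfl
    rw [he, hBAv hA]

lemma lam_eq (hA : IsUnit A) (pp : ℝ) (mh : Fin k → ZMod 2) :
    lamPSC pp A mh
      = ∑ v ∈ Finset.univ.filter (fun v => cvec A v = mh), bernP pp (k+m) v := by
  rw [lamPSC]
  refine Finset.sum_nbij' (fun u => A⁻¹ *ᵥ Sum.elim mh u)
    (fun v i => A.mulVec v (Sum.inr i)) ?_ ?_ ?_ ?_ ?_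
  · intro u _
    refine Finset.mem_filter.mpr ⟨Finset.mem_univ _, ?_⟩
    funext i
    show (A *ᵥ _) (Sum.inl i) = mh i
    rw [hABv hA]; rfl
  · intro v _; exact Finset.mem_univ _
  · intro u _
    funext i
    show (A *ᵥ (A⁻¹ *ᵥ _)) (Sum.inr i) = u i
    rw [hABv hA]; rfl
  · intro v hv
    have h := (Finset.mem_filter.mp hv).2
    have he : Sum.elim mh (fun i => A.mulVec v (Sum.inr i)) = A *ᵥ v := by
      funext x
      cases x with
      | inl i => exact (congrFun h i).symm
      | inr i => rfl
    show A⁻¹ *ᵥ _ = v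
    rw [he, hBAv hA]
  · intro u _
    rw [coset_param]

lemma lam_pos (hA : IsUnit A) {pp : ℝ} (hp0 : 0 < pp) (hp1 : pp < 1)
    (mh : Fin k → ZMod 2) : 0 < lamPSC pp A mh := by
  rw [lamPSC]
  refine Finset.sum_pos (fun u _ => ?_) Finset.univ_nonempty
  exact bernP_pos hp0 hp1 _ _

lemma psi_apply (hA : IsUnit A) {pp : ℝ} (hp0 : 0 < pp) (hp1 : pp < 1)
    (mh : Fin k → ZMod 2) (v : (Fin k ⊕ Fin m) → ZMod 2) :
    psiPSC pp A mh v = if cvec A v = mh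
      then Real.sqrt (bernP pp (k+m) v) / Real.sqrt (lamPSC pp A mh) else 0 := by
  rw [psiPSC, if_congr (exists_iff hA mh v) rfl rfl]
  by_cases h : cvec A v = mh
  · rw [if_pos h, if_pos h, Real.sqrt_div (le_of_lt (bernP_pos hp0 hp1 _ _))]
  · rw [if_neg h, if_neg h]

lemma rho_apply (θ : ℝ) (v w : (Fin k ⊕ Fin m) → ZMod 2) :
    rhoPSC θ A v w = if cvec A v = cvec A w then amp θ v * amp θ w else 0 := by
  have step : ∀ g : Fin k → ZMod 2,
      pscVec θ A g v * pscVec θ A g w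
        = chi (g ⬝ᵥ ((A.submatrix Sum.inl id) *ᵥ (v + w))) * (amp θ v * amp θ w) := by
    intro g
    have e1 : pscVec θ A g v
        = chi (g ⬝ᵥ ((A.submatrix Sum.inl id) *ᵥ v)) * amp θ v := by
      rw [Matrix.dotProduct_mulVec]; rfl
    have e2 : pscVec θ A g w
        = chi (g ⬝ᵥ ((A.submatrix Sum.inl id) *ᵥ w)) * amp θ w := by
      rw [Matrix.dotProduct_mulVec]; rfl
    rw [e1, e2, Matrix.mulVec_add, dotProduct_add, chi_add]; ring
  have hsum : rhoPSC θ A v w = ((2:ℝ)^k)⁻¹ *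
      ((∑ g : Fin k → ZMod 2, chi (g ⬝ᵥ ((A.submatrix Sum.inl id) *ᵥ (v + w))))
        * (amp θ v * amp θ w)) := by
    rw [rhoPSC]
    simp only [Matrix.smul_apply, Matrix.sum_apply, Matrix.vecMulVec_apply,
      smul_eq_mul]
    rw [Finset.sum_congr rfl (fun g _ => step g), ← Finset.sum_mul]
  rw [hsum, chi_sum]
  have hiff : ((A.submatrix Sum.inl id) *ᵥ (v + w) = 0) ↔ cvec A v = cvec A w := by
    have hGx : ∀ x : (Fin k ⊕ Fin m) → ZMod 2, ∀ i,
        ((A.submatrix Sum.inl id) *ᵥ x) i = (A *ᵥ x) (Sum.inl i) := by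
      intro x i; simp [Matrix.mulVec, dotProduct]
    constructor
    · intro h
      funext i
      have h1 := congrFun h i
      rw [hGx] at h1
      rw [Matrix.mulVec_add] at h1
      exact (show ∀ a b : ZMod 2, a + b = 0 → a = b by decide) _ _ h1
    · intro h
      funext i
      rw [hGx, Matrix.mulVec_add]
      have h1 := congrFun h i
      exact (show ∀ a b : ZMod 2, a = b → a + b = 0 by decide) _ _ h1
  by_cases hc : cvec A v = cvec A w
  · rw [if_pos (hiff.mpr hc), if_pos hc]
    have h2 : ((2:ℝ)^k) ≠ 0 := by positivity
    field_simp
  · rw [if_neg (fun h => hc (hiff.mp h)), if_neg hc]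
    ring

end PSCaux

/-- Eigendecomposition of the averaged PSC coset state: each
|ψ(m̂)⟩ is an eigenvector of ρ with eigenvalue λ(m̂) = 2^{-k/2} ŝ(m̂), where
p = sin²(θ/2) = (1 - cos θ)/2, and these account for all nonzero eigenvalues:
ρ = ∑_m̂ λ(m̂) |ψ(m̂)⟩⟨ψ(m̂)|. -/
theorem psc_coset_state_eigendecomposition (k m : ℕ)
    (A : Matrix (Fin k ⊕ Fin m) (Fin k ⊕ Fin m) (ZMod 2)) (hA : IsUnit A)
    (θ p : ℝ) (hθ0 : 0 < θ) (hθ1 : θ ≤ Real.pi / 2)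
    (hp : p = (1 - Real.cos θ) / 2) :
    (∀ mh : Fin k → ZMod 2,
      (rhoPSC θ A).mulVec (psiPSC p A mh) = lamPSC p A mh • psiPSC p A mh) ∧
    rhoPSC θ A = ∑ mh : Fin k → ZMod 2,
      lamPSC p A mh • Matrix.vecMulVec (psiPSC p A mh) (psiPSC p A mh) := by
  have hs : 0 < Real.sin (θ/2) :=
    Real.sin_pos_of_pos_of_lt_pi (by linarith) (by linarith [Real.pi_pos])
  have hc : 0 < Real.cos (θ/2) :=
    Real.cos_pos_of_mem_Ioo ⟨by linarith [Real.pi_pos], by linarith [Real.pi_pos]⟩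
  have hcos2 : Real.cos (θ/2)^2 = 1/2 + Real.cos θ/2 := by
    rw [Real.cos_sq]; norm_num [show 2*(θ/2) = θ by ring]
  have hps : p = Real.sin (θ/2)^2 := by
    rw [Real.sin_sq, hcos2, hp]; ring
  have h1p : 1 - p = Real.cos (θ/2)^2 := by rw [hps, Real.sin_sq]; ring
  have hp0 : 0 < p := by rw [hps]; positivity
  have hp1 : p < 1 := by
    have hcc : 0 < Real.cos (θ/2)^2 := by positivity
    linarith
  have hamp := PSCaux.amp_eq_sqrt (k := k) (m := m) hps h1p hs.le hc.le
  have hbpos : ∀ v : (Fin k ⊕ Fin m) → ZMod 2, 0 < bernP p (k+m) v :=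
    fun v => PSCaux.bernP_pos hp0 hp1 _ _
  constructor
  · intro mh
    have hl : 0 < lamPSC p A mh := PSCaux.lam_pos hA hp0 hp1 mh
    have hsl : Real.sqrt (lamPSC p A mh) ≠ 0 :=
      ne_of_gt (Real.sqrt_pos.mpr hl)
    funext v
    have hmv : (rhoPSC θ A).mulVec (psiPSC p A mh) v
        = ∑ w, rhoPSC θ A v w * psiPSC p A mh w := rfl
    rw [hmv]
    have hterm : ∀ w, rhoPSC θ A v w * psiPSC p A mh w
        = if PSCaux.cvec A v = mh then
            (if PSCaux.cvec A w = mh then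
              Real.sqrt (bernP p (k+m) v) / Real.sqrt (lamPSC p A mh)
                * bernP p (k+m) w
            else 0)
          else 0 := by
      intro w
      rw [PSCaux.rho_apply, PSCaux.psi_apply hA hp0 hp1, hamp, hamp]
      by_cases hv : PSCaux.cvec A v = mh
      · by_cases hw : PSCaux.cvec A w = mh
        · rw [if_pos (hv.trans hw.symm), if_pos hw, if_pos hv, if_pos hw]
          have hmm : Real.sqrt (bernP p (k+m) w) * Real.sqrt (bernP p (k+m) w)
              = bernP p (k+m) w := Real.mul_self_sqrt (hbpos w).le
          calc Real.sqrt (bernP p (k+m) v) * Real.sqrt (bernP p (k+m) w)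
                * (Real.sqrt (bernP p (k+m) w) / Real.sqrt (lamPSC p A mh))
              = Real.sqrt (bernP p (k+m) v)
                * (Real.sqrt (bernP p (k+m) w) * Real.sqrt (bernP p (k+m) w))
                / Real.sqrt (lamPSC p A mh) := by ring
            _ = _ := by rw [hmm]; ring
        · rw [if_neg hw, if_pos hv, if_neg hw, mul_zero]
      · by_cases hw : PSCaux.cvec A w = mh
        · rw [if_neg (fun h => hv (h.trans hw)), if_neg hv, zero_mul]
        · rw [if_neg hw, if_neg hv, mul_zero]
    rw [Finset.sum_congr rfl (fun w _ => hterm w)]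
    rw [Pi.smul_apply, PSCaux.psi_apply hA hp0 hp1, smul_eq_mul]
    by_cases hv : PSCaux.cvec A v = mh
    · rw [if_pos hv]
      simp only [if_pos hv]
      rw [← Finset.sum_filter, ← Finset.mul_sum, ← PSCaux.lam_eq hA]
      ring
    · rw [if_neg hv]
      simp only [if_neg hv]
      rw [Finset.sum_const_zero, mul_zero]
  · ext v w
    rw [PSCaux.rho_apply]
    rw [Matrix.sum_apply]
    simp only [Matrix.smul_apply, Matrix.vecMulVec_apply, smul_eq_mul]
    have hterm : ∀ mh : Fin k → ZMod 2,
        lamPSC p A mh * (psiPSC p A mh v * psiPSC p A mh w)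
        = if PSCaux.cvec A v = mh then
            lamPSC p A mh *
              (Real.sqrt (bernP p (k+m) v) / Real.sqrt (lamPSC p A mh) *
                (if PSCaux.cvec A w = mh then
                  Real.sqrt (bernP p (k+m) w) / Real.sqrt (lamPSC p A mh)
                else 0))
          else 0 := by
      intro mh
      rw [PSCaux.psi_apply hA hp0 hp1, PSCaux.psi_apply hA hp0 hp1]
      by_cases hv : PSCaux.cvec A v = mh
      · rw [if_pos hv, if_pos hv]
      · rw [if_neg hv, if_neg hv, zero_mul, mul_zero]
    rw [Finset.sum_congr rfl (fun mh _ => hterm mh)]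
    rw [Finset.sum_ite_eq Finset.univ (PSCaux.cvec A v)]
    rw [if_pos (Finset.mem_univ _)]
    set cv := PSCaux.cvec A v
    have hl : 0 < lamPSC p A cv := PSCaux.lam_pos hA hp0 hp1 cv
    have hsl : Real.sqrt (lamPSC p A cv) ≠ 0 := ne_of_gt (Real.sqrt_pos.mpr hl)
    have hll : Real.sqrt (lamPSC p A cv) * Real.sqrt (lamPSC p A cv)
        = lamPSC p A cv := Real.mul_self_sqrt hl.le
    by_cases hvw : cv = PSCaux.cvec A w
    · rw [if_pos hvw, if_pos hvw.symm, hamp, hamp]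
      rw [div_mul_div_comm, hll]
      field_simp
    · rw [if_neg hvw, if_neg (fun h => hvw h.symm), mul_zero, mul_zero]

end
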